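/- The polynomial ∏_{i=1}^n (1 + q^i) is symmetric and unimodal. -/

import Mathlib

/-- A polynomial is symmetric if `a_i = a_{d-i}` for all `i ≤ d`, `d` the degree. -/
def SymmPolyN (p : Polynomial ℕ) : Prop :=
  ∀ i ≤ p.natDegree, p.coeff i = p.coeff (p.natDegree - i)

/-- A polynomial is unimodal if its coefficients weakly increase up to some index `m`
and weakly decrease afterwards. -/
def UnimodalPolyN (p : Polynomial ℕ) : Prop :=
  ∃ m, (∀ i < m, p.coeff i ≤ p.coeff (i + 1)) ∧ (∀ i, m ≤ i → p.coeff (i + 1) ≤ p.coeff i)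

open Finset Polynomial

namespace Stmt18

variable (n : ℕ)

/-- the polynomial -/
noncomputable def P (n : ℕ) : Polynomial ℕ := ∏ i ∈ Finset.Icc 1 n, (1 + (Polynomial.X : Polynomial ℕ) ^ i)

/-- subsets of `Icc 1 n` with sum `k` -/
def A (n k : ℕ) : Finset (Finset ℕ) := ((Icc 1 n).powerset).filter (fun t => t.sum id = k)

def Nn (n : ℕ) : ℕ := (Icc 1 n).sum id

lemma P_eq : P n = ∑ t ∈ (Icc 1 n).powerset, X ^ (t.sum id) := by
  unfold P
  rw [show (∏ i ∈ Finset.Icc 1 n, (1 + (X : Polynomial ℕ) ^ i)) =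
      ∏ i ∈ Finset.Icc 1 n, ((X : Polynomial ℕ) ^ i + 1) by
    exact Finset.prod_congr rfl fun i _ => add_comm _ _]
  rw [Finset.prod_add]
  refine Finset.sum_congr rfl fun t ht => ?_
  rw [Finset.prod_pow_eq_pow_sum]; simp [Finset.sum_congr, id]

lemma coeff_P (k : ℕ) : (P n).coeff k = (A n k).card := by
  rw [P_eq, Polynomial.finset_sum_coeff]
  simp only [Polynomial.coeff_X_pow]
  rw [Finset.sum_boole]
  norm_cast
  congr 1
  apply Finset.filter_congr
  intro t _
  simp [eq_comm]


lemma mem_A {n k : ℕ} {t : Finset ℕ} : t ∈ A n k ↔ t ⊆ Icc 1 n ∧ t.sum id = k := by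
  simp [A]

lemma sum_le_Nn {n : ℕ} {t : Finset ℕ} (ht : t ⊆ Icc 1 n) : t.sum id ≤ Nn n :=
  Finset.sum_le_sum_of_subset ht

lemma A_eq_empty {n k : ℕ} (hk : Nn n < k) : A n k = ∅ := by
  rw [Finset.eq_empty_iff_forall_notMem]
  intro t ht
  rw [mem_A] at ht
  exact absurd (ht.2 ▸ sum_le_Nn ht.1) (by omega)

lemma A_Nn (n : ℕ) : A n (Nn n) = {Icc 1 n} := by
  ext t
  rw [mem_A, Finset.mem_singleton]
  constructor
  · rintro ⟨h1, h2⟩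
    have h3 := Finset.sum_sdiff (f := id) h1
    have h2' : ∑ x ∈ t, id x = ∑ x ∈ Icc 1 n, id x := h2
    have h4 : ∑ x ∈ Icc 1 n \ t, id x = 0 := by omega
    have h5 : Icc 1 n \ t = ∅ := by
      rw [Finset.eq_empty_iff_forall_notMem]
      intro a ha
      have ha0 : a = 0 := by
        have := (Finset.sum_eq_zero_iff).mp h4 a ha
        simpa using this
      have : a ∈ Icc 1 n := (Finset.sdiff_subset) ha
      rw [Finset.mem_Icc] at this
      omega
    have := Finset.sdiff_eq_empty_iff_subset.mp h5
    exact Finset.Subset.antisymm h1 this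
  · rintro rfl
    exact ⟨Finset.Subset.refl _, rfl⟩

lemma sum_sdiff_eq {n k : ℕ} {t : Finset ℕ} (h1 : t ⊆ Icc 1 n) (h2 : t.sum id = k) :
    (Icc 1 n \ t).sum id = Nn n - k ∧ k ≤ Nn n := by
  have h3 : (Icc 1 n \ t).sum id + t.sum id = (Icc 1 n).sum id := Finset.sum_sdiff h1
  have h4 : (Icc 1 n).sum id = Nn n := rfl
  omega

lemma card_A_symm {n k : ℕ} (hk : k ≤ Nn n) : (A n k).card = (A n (Nn n - k)).card := by
  apply Finset.card_bij (fun t _ => Icc 1 n \ t)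
  · intro t ht
    rw [mem_A] at ht ⊢
    exact ⟨Finset.sdiff_subset, (sum_sdiff_eq ht.1 ht.2).1⟩
  · intro t1 h1 t2 h2 he
    rw [mem_A] at h1 h2
    have e1 : Icc 1 n \ (Icc 1 n \ t1) = t1 := Finset.sdiff_sdiff_eq_self h1.1
    have e2 : Icc 1 n \ (Icc 1 n \ t2) = t2 := Finset.sdiff_sdiff_eq_self h2.1
    rw [← e1, ← e2, he]
  · intro t ht
    rw [mem_A] at ht
    refine ⟨Icc 1 n \ t, ?_, Finset.sdiff_sdiff_eq_self ht.1⟩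
    rw [mem_A]
    refine ⟨Finset.sdiff_subset, ?_⟩
    have h5 := (sum_sdiff_eq ht.1 ht.2).1
    omega

lemma natDegree_P (n : ℕ) : (P n).natDegree = Nn n := by
  apply le_antisymm
  · rw [Polynomial.natDegree_le_iff_coeff_eq_zero]
    intro m hm
    rw [coeff_P, A_eq_empty hm, Finset.card_empty]
  · apply Polynomial.le_natDegree_of_ne_zero
    rw [coeff_P, A_Nn]
    simp

lemma symm_P (n : ℕ) : SymmPolyN (P n) := by
  intro i hi
  rw [natDegree_P] at hi ⊢
  rw [coeff_P, coeff_P, card_A_symm hi]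


/-! ### Operators -/

abbrev V : Type := Finset ℕ →₀ ℚ

noncomputable def upF (j : ℕ) (S : Finset ℕ) : V :=
  if j ∈ S ∧ j+1 ∉ S then Finsupp.single (insert (j+1) (S.erase j)) 1 else 0
noncomputable def addF (S : Finset ℕ) : V :=
  if 1 ∉ S then Finsupp.single (insert 1 S) 1 else 0
noncomputable def dnF (j : ℕ) (S : Finset ℕ) : V :=
  if j+1 ∈ S ∧ j ∉ S then Finsupp.single (insert j (S.erase (j+1))) 1 else 0
noncomputable def rmF (S : Finset ℕ) : V :=
  if 1 ∈ S then Finsupp.single (S.erase 1) 1 else 0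

noncomputable def NQ (n : ℕ) : ℚ := (Nn n : ℚ)
noncomputable def gQ (n j : ℕ) : ℚ := ((n*(n+1) : ℕ) : ℚ) - ((j*(j+1) : ℕ) : ℚ)

noncomputable def eFun (n : ℕ) (S : Finset ℕ) : V :=
  NQ n • addF S + ∑ j ∈ Icc 1 (n-1), gQ n j • upF j S
noncomputable def fFun (n : ℕ) (S : Finset ℕ) : V :=
  rmF S + ∑ j ∈ Icc 1 (n-1), dnF j S

noncomputable def Eop (n : ℕ) : V →ₗ[ℚ] V := Finsupp.lift V ℚ (Finset ℕ) (eFun n)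
noncomputable def Fop (n : ℕ) : V →ₗ[ℚ] V := Finsupp.lift V ℚ (Finset ℕ) (fFun n)

lemma Eop_single (n : ℕ) (S : Finset ℕ) : Eop n (Finsupp.single S 1) = eFun n S := by
  simp [Eop, Finsupp.lift_apply, Finsupp.sum_single_index]

lemma Fop_single (n : ℕ) (S : Finset ℕ) : Fop n (Finsupp.single S 1) = fFun n S := by
  simp [Fop, Finsupp.lift_apply, Finsupp.sum_single_index]

/-! ### Cancellation lemmas -/

variable {S : Finset ℕ}

lemma C1 (S : Finset ℕ) :
    (if 1 ∉ S then rmF (insert 1 S) else 0) = if 1 ∉ S then Finsupp.single S 1 else 0 := by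
  by_cases h : 1 ∈ S <;> simp [rmF, h, Finset.erase_insert]

lemma C2 (S : Finset ℕ) :
    (if 1 ∈ S then addF (S.erase 1) else 0) = if 1 ∈ S then Finsupp.single S 1 else 0 := by
  by_cases h : 1 ∈ S <;> simp [addF, h, Finset.insert_erase, Finset.notMem_erase]

lemma C3 (j : ℕ) (S : Finset ℕ) :
    (if j ∈ S ∧ j+1 ∉ S then dnF j (insert (j+1) (S.erase j)) else 0)
      = if j ∈ S ∧ j+1 ∉ S then Finsupp.single S 1 else 0 := by
  by_cases h : j ∈ S ∧ j+1 ∉ S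
  · have h2 : j+1 ∈ insert (j+1) (S.erase j) ∧ j ∉ insert (j+1) (S.erase j) := by
      simp [Finset.mem_insert, Finset.mem_erase]
    rw [if_pos h, if_pos h, dnF, if_pos h2]
    congr 1
    rw [Finset.erase_insert (by simp [Finset.mem_erase, h.2]),
      Finset.insert_erase h.1]
  · rw [if_neg h, if_neg h]

lemma C4 (j : ℕ) (S : Finset ℕ) :
    (if j+1 ∈ S ∧ j ∉ S then upF j (insert j (S.erase (j+1))) else 0)
      = if j+1 ∈ S ∧ j ∉ S then Finsupp.single S 1 else 0 := by
  by_cases h : j+1 ∈ S ∧ j ∉ S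
  · have h2 : j ∈ insert j (S.erase (j+1)) ∧ j+1 ∉ insert j (S.erase (j+1)) := by
      simp [Finset.mem_insert, Finset.mem_erase]
    rw [if_pos h, if_pos h, upF, if_pos h2]
    congr 1
    rw [Finset.erase_insert (by simp [Finset.mem_erase, h.2]),
      Finset.insert_erase h.1]
  · rw [if_neg h, if_neg h]


lemma C5 (j : ℕ) (hj : 1 ≤ j) (S : Finset ℕ) :
    (if j ∈ S ∧ j+1 ∉ S then rmF (insert (j+1) (S.erase j)) else 0)
      = if 1 ∈ S then upF j (S.erase 1) else 0 := by
  rcases eq_or_lt_of_le hj with rfl | hj2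
  · trans (0 : V)
    · have m : (1:ℕ) ∉ insert 2 (S.erase 1) := by
        simp [Finset.mem_insert, Finset.mem_erase]
      split_ifs with h
      all_goals first | rfl | simp only [rmF, if_neg m]
    · have m : ¬((1:ℕ) ∈ S.erase 1 ∧ 2 ∉ S.erase 1) := by
        simp [Finset.mem_erase]
      split_ifs with h
      all_goals first | rfl | simp only [upF, if_neg m]
  · by_cases h : j ∈ S ∧ j+1 ∉ S
    · by_cases h1 : 1 ∈ S
      · have m1 : (1:ℕ) ∈ insert (j+1) (S.erase j) := by
          simp only [Finset.mem_insert, Finset.mem_erase]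
          exact Or.inr ⟨by omega, h1⟩
        have m2 : j ∈ S.erase 1 ∧ j+1 ∉ S.erase 1 := by
          simp only [Finset.mem_erase]
          exact ⟨⟨by omega, h.1⟩, fun hc => h.2 hc.2⟩
        rw [if_pos h, if_pos h1]
        simp only [rmF, upF, if_pos m1, if_pos m2]
        congr 1
        ext a
        simp only [Finset.mem_insert, Finset.mem_erase]
        by_cases ha : a ∈ S <;> simp [ha] <;> omega
      · have m1 : (1:ℕ) ∉ insert (j+1) (S.erase j) := by
          simp only [Finset.mem_insert, Finset.mem_erase]
          push_neg
          exact ⟨by omega, fun _ => h1⟩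
        rw [if_pos h, if_neg h1]
        simp only [rmF, if_neg m1]
    · by_cases h1 : 1 ∈ S
      · have m2 : ¬(j ∈ S.erase 1 ∧ j+1 ∉ S.erase 1) := by
          simp only [Finset.mem_erase]
          intro hc
          exact h ⟨hc.1.2, fun hh => hc.2 ⟨by omega, hh⟩⟩
        rw [if_neg h, if_pos h1]
        simp only [upF, if_neg m2]
      · rw [if_neg h, if_neg h1]

lemma C6 (k : ℕ) (hk : 1 ≤ k) (S : Finset ℕ) :
    (if 1 ∉ S then dnF k (insert 1 S) else 0)
      = if k+1 ∈ S ∧ k ∉ S then addF (insert k (S.erase (k+1))) else 0 := by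
  rcases eq_or_lt_of_le hk with rfl | hk2
  · trans (0 : V)
    · have m : ¬((1:ℕ)+1 ∈ insert 1 S ∧ 1 ∉ insert 1 S) := by
        simp [Finset.mem_insert]
      split_ifs with h
      all_goals first | rfl | simp only [dnF, if_neg m]
    · have m : ¬ (1:ℕ) ∉ insert 1 (S.erase (1+1)) := by
        simp [Finset.mem_insert]
      split_ifs with h
      all_goals first | rfl | simp only [addF, if_neg m]
  · by_cases h1 : 1 ∈ S
    · rw [if_neg (by simpa using h1)]
      by_cases h : k+1 ∈ S ∧ k ∉ S
      · have m : ¬ (1:ℕ) ∉ insert k (S.erase (k+1)) := by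
          simp only [Finset.mem_insert, Finset.mem_erase, not_not]
          exact Or.inr ⟨by omega, h1⟩
        rw [if_pos h]
        simp only [addF, if_neg m]
      · rw [if_neg h]
    · rw [if_pos h1]
      by_cases h : k+1 ∈ S ∧ k ∉ S
      · have m1 : k+1 ∈ insert 1 S ∧ k ∉ insert 1 S := by
          simp only [Finset.mem_insert]
          constructor
          · exact Or.inr h.1
          · push_neg
            exact ⟨by omega, h.2⟩
        have m2 : (1:ℕ) ∉ insert k (S.erase (k+1)) := by
          simp only [Finset.mem_insert, Finset.mem_erase]
          push_neg
          exact ⟨by omega, fun _ => h1⟩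
        rw [if_pos h]
        simp only [dnF, addF, if_pos m1, if_neg (not_not.mpr m2), if_pos m2]
        congr 1
        ext a
        simp only [Finset.mem_insert, Finset.mem_erase]
        by_cases ha : a ∈ S <;> simp [ha] <;> omega
      · have m1 : ¬(k+1 ∈ insert 1 S ∧ k ∉ insert 1 S) := by
          simp only [Finset.mem_insert]
          intro hc
          rcases hc.1 with h' | h'
          · omega
          · push_neg at hc
            exact h ⟨h', hc.2.2⟩
        rw [if_neg h]
        simp only [dnF, if_neg m1]

lemma C7 (j k : ℕ) (hjk : j ≠ k) (S : Finset ℕ) :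
    (if j ∈ S ∧ j+1 ∉ S then dnF k (insert (j+1) (S.erase j)) else 0)
      = if k+1 ∈ S ∧ k ∉ S then upF j (insert k (S.erase (k+1))) else 0 := by
  by_cases hkj : k = j+1
  · subst hkj
    trans (0 : V)
    · have m : ¬(j+1+1 ∈ insert (j+1) (S.erase j) ∧ j+1 ∉ insert (j+1) (S.erase j)) := by
        simp [Finset.mem_insert]
      split_ifs with h
      all_goals first | rfl | simp only [dnF, if_neg m]
    · have m : ¬(j ∈ insert (j+1) (S.erase (j+1+1)) ∧ j+1 ∉ insert (j+1) (S.erase (j+1+1))) := by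
        simp only [Finset.mem_insert, Finset.mem_erase]
        intro hc
        exact hc.2 (Or.inl trivial)
      split_ifs with h
      all_goals first | rfl | simp only [upF, if_neg m]
  · by_cases hjk1 : j = k+1
    · subst hjk1
      trans (0 : V)
      · have m : ¬(k+1 ∈ insert (k+1+1) ((S.erase (k+1))) ∧ k ∉ insert (k+1+1) (S.erase (k+1))) := by
          simp only [Finset.mem_insert, Finset.mem_erase]
          intro hc
          rcases hc.1 with h' | h'
          · omega
          · exact h'.1 rfl
        split_ifs with h
        all_goals first | rfl | simp only [dnF, if_neg m]
      · have m : ¬(k+1 ∈ insert k (S.erase (k+1)) ∧ k+1+1 ∉ insert k (S.erase (k+1))) := by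
          simp only [Finset.mem_insert, Finset.mem_erase]
          intro hc
          rcases hc.1 with h' | h'
          · omega
          · exact h'.1 rfl
        split_ifs with h
        all_goals first | rfl | simp only [upF, if_neg m]
    · -- generic case : j ≠ k, k ≠ j+1, j ≠ k+1
      by_cases h : j ∈ S ∧ j+1 ∉ S
      · by_cases h' : k+1 ∈ S ∧ k ∉ S
        · have m1 : k+1 ∈ insert (j+1) (S.erase j) ∧ k ∉ insert (j+1) (S.erase j) := by
            simp only [Finset.mem_insert, Finset.mem_erase]
            constructor
            · exact Or.inr ⟨by omega, h'.1⟩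
            · push_neg
              exact ⟨by omega, fun _ => h'.2⟩
          have m2 : j ∈ insert k (S.erase (k+1)) ∧ j+1 ∉ insert k (S.erase (k+1)) := by
            simp only [Finset.mem_insert, Finset.mem_erase]
            constructor
            · exact Or.inr ⟨by omega, h.1⟩
            · push_neg
              exact ⟨by omega, fun _ => h.2⟩
          rw [if_pos h, if_pos h']
          simp only [dnF, upF, if_pos m1, if_pos m2]
          congr 1
          ext a
          simp only [Finset.mem_insert, Finset.mem_erase]
          by_cases ha : a ∈ S <;> simp [ha] <;> omega
        · have m1 : ¬(k+1 ∈ insert (j+1) (S.erase j) ∧ k ∉ insert (j+1) (S.erase j)) := by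
            simp only [Finset.mem_insert, Finset.mem_erase]
            intro hc
            rcases hc.1 with h1 | h1
            · omega
            · push_neg at hc
              exact h' ⟨h1.2, hc.2.2 (by omega)⟩
          rw [if_pos h, if_neg h']
          simp only [dnF, if_neg m1]
      · by_cases h' : k+1 ∈ S ∧ k ∉ S
        · have m2 : ¬(j ∈ insert k (S.erase (k+1)) ∧ j+1 ∉ insert k (S.erase (k+1))) := by
            simp only [Finset.mem_insert, Finset.mem_erase]
            intro hc
            rcases hc.1 with h1 | h1
            · omega
            · push_neg at hc
              exact h ⟨h1.2, hc.2.2 (by omega)⟩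
          rw [if_neg h, if_pos h']
          simp only [upF, if_neg m2]
        · rw [if_neg h, if_neg h']


/-! ### Scalar identity -/

lemma twoNn (n : ℕ) : 2 * Nn n = n * (n+1) := by
  induction n with
  | zero => rfl
  | succ m ih =>
      have : Nn (m+1) = Nn m + (m+1) := by
        unfold Nn
        rw [Finset.sum_Icc_succ_top (by omega : 1 ≤ m+1)]
        rfl
      rw [this]
      ring_nf
      ring_nf at ih
      omega

lemma sum_Icc_one (n : ℕ) (f : ℕ → ℚ) : ∑ j ∈ Icc 1 n, f j = ∑ j ∈ range n, f (j+1) := by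
  rw [← Finset.Ico_add_one_right_eq_Icc, Finset.sum_Ico_eq_sum_range]
  simp [add_comm]

lemma gQ_eq (n j : ℕ) : gQ n j = 2 * NQ n - (j:ℚ)*((j:ℚ)+1) := by
  unfold gQ NQ
  rw [← twoNn]
  push_cast
  ring

lemma telescope (C : ℚ) (x : ℕ → ℚ) (m : ℕ) :
    ∑ j ∈ Finset.range m, (C - (j:ℚ)*((j:ℚ)+1)) * (x j - x (j+1))
      = C * x 0 - (C - (m:ℚ)*((m:ℚ)+1)) * x m - ∑ j ∈ Finset.range m, 2*((j:ℚ)+1) * x (j+1) := by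
  induction m with
  | zero => simp
  | succ m ih =>
      rw [Finset.sum_range_succ, Finset.sum_range_succ, ih]
      push_cast
      ring

lemma scalar_id (n : ℕ) (S : Finset ℕ) (hS : S ⊆ Icc 1 n) :
    NQ n * ((if 1 ∉ S then (1:ℚ) else 0) - (if 1 ∈ S then (1:ℚ) else 0))
      + ∑ j ∈ Icc 1 (n-1), gQ n j *
          ((if j ∈ S ∧ j+1 ∉ S then (1:ℚ) else 0) - (if j+1 ∈ S ∧ j ∉ S then (1:ℚ) else 0))
      = NQ n - 2 * ((S.sum id : ℕ) : ℚ) := by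
  rcases Nat.eq_zero_or_pos n with rfl | hn
  · have hSe : S = ∅ := Finset.subset_empty.mp (by simpa using hS)
    subst hSe
    simp [NQ, Nn]
  obtain ⟨m, rfl⟩ : ∃ m, n = m + 1 := ⟨n - 1, by omega⟩
  simp only [Nat.add_sub_cancel]
  set x : ℕ → ℚ := fun i => if i ∈ S then (1:ℚ) else 0 with hxdef
  have hx0 : x 0 = 0 := by
    have : (0:ℕ) ∉ S := fun hc => by simpa using (Finset.mem_Icc.mp (hS hc)).1
    simp [hxdef, this]
  have hd : ((if 1 ∉ S then (1:ℚ) else 0) - (if 1 ∈ S then (1:ℚ) else 0)) = 1 - 2 * x 1 := by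
    by_cases h : 1 ∈ S <;> simp [hxdef, h] <;> norm_num
  have hint : ∀ j : ℕ, ((if j ∈ S ∧ j+1 ∉ S then (1:ℚ) else 0) - (if j+1 ∈ S ∧ j ∉ S then (1:ℚ) else 0))
      = x j - x (j+1) := by
    intro j
    by_cases h1 : j ∈ S <;> by_cases h2 : j+1 ∈ S <;> simp [hxdef, h1, h2]
  have hC : (((m+1)*(m+2) : ℕ) : ℚ) = 2 * NQ (m+1) := by
    unfold NQ
    rw [← twoNn]
    push_cast
    ring
  have e2 : ∑ j ∈ range (m+1), 2*((j:ℚ)+1) * x (j+1) = 2 * ((S.sum id : ℕ) : ℚ) := by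
    have st1 : ∑ j ∈ range (m+1), 2*((j:ℚ)+1) * x (j+1) = ∑ j ∈ Icc 1 (m+1), 2*(j:ℚ) * x j := by
      rw [sum_Icc_one (m+1) (fun j => 2*(j:ℚ) * x j)]
      apply Finset.sum_congr rfl
      intro j _
      push_cast
      ring
    have st2 : ∑ j ∈ Icc 1 (m+1), 2*(j:ℚ) * x j = ∑ j ∈ Icc 1 (m+1), (if j ∈ S then 2*(j:ℚ) else 0) := by
      apply Finset.sum_congr rfl
      intro j _
      by_cases h : j ∈ S <;> simp [hxdef, h]
    have st3 : ((S.sum id : ℕ) : ℚ) = ∑ j ∈ S, (j:ℚ) := by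
      push_cast
      rfl
    rw [st1, st2, Finset.sum_ite_mem, Finset.inter_eq_right.mpr hS, st3, Finset.mul_sum]
  have eA : ∑ j ∈ Icc 1 m, gQ (m+1) j * (x j - x (j+1))
      = 2 * NQ (m+1) * x 1 - 2 * ((S.sum id : ℕ) : ℚ) := by
    have hIcc : ∑ j ∈ Icc 1 m, gQ (m+1) j * (x j - x (j+1))
        = ∑ j ∈ range m, (2 * NQ (m+1) - ((j:ℚ)+1)*(((j:ℚ)+1)+1)) * (x (j+1) - x (j+1+1)) := by
      rw [sum_Icc_one m (fun j => gQ (m+1) j * (x j - x (j+1)))]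
      apply Finset.sum_congr rfl
      intro j _
      rw [gQ_eq]
      push_cast
      ring
    have hsplit : ∑ j ∈ range (m+1), (2 * NQ (m+1) - (j:ℚ)*((j:ℚ)+1)) * (x j - x (j+1))
        = ∑ j ∈ range m, (2 * NQ (m+1) - ((j:ℚ)+1)*(((j:ℚ)+1)+1)) * (x (j+1) - x (j+1+1))
          + (2 * NQ (m+1) - (0:ℚ)*((0:ℚ)+1)) * (x 0 - x 1) := by
      rw [Finset.sum_range_succ']
      congr 1
      apply Finset.sum_congr rfl
      intro j _
      push_cast
      ring
    have htel := telescope (2 * NQ (m+1)) x (m+1)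
    have hlast : (2 * NQ (m+1) - ((m+1:ℕ):ℚ)*(((m+1:ℕ):ℚ)+1)) * x (m+1) = 0 := by
      have : ((m+1:ℕ):ℚ)*(((m+1:ℕ):ℚ)+1) = 2 * NQ (m+1) := by
        rw [← hC]
        push_cast
        ring
      rw [this]
      ring
    rw [hIcc]
    have hr : ∑ j ∈ range m, (2 * NQ (m+1) - ((j:ℚ)+1)*(((j:ℚ)+1)+1)) * (x (j+1) - x (j+1+1))
        = ∑ j ∈ range (m+1), (2 * NQ (m+1) - (j:ℚ)*((j:ℚ)+1)) * (x j - x (j+1))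
          - (2 * NQ (m+1) - (0:ℚ)*((0:ℚ)+1)) * (x 0 - x 1) := by
      rw [hsplit]
      ring
    rw [hr, htel, hx0, e2, hlast]
    ring
  rw [hd]
  rw [Finset.sum_congr rfl (fun j _ => by rw [hint j])]
  rw [eA]
  ring


/-! ### Expansion lemmas -/

lemma Fop_addF (n : ℕ) (S : Finset ℕ) :
    Fop n (addF S) = (if 1 ∉ S then rmF (insert 1 S) else 0)
      + ∑ k ∈ Icc 1 (n-1), (if 1 ∉ S then dnF k (insert 1 S) else 0) := by
  unfold addF
  split_ifs with h
  all_goals first | rw [Fop_single, fFun] | simp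

lemma Fop_upF (n j : ℕ) (S : Finset ℕ) :
    Fop n (upF j S) = (if j ∈ S ∧ j+1 ∉ S then rmF (insert (j+1) (S.erase j)) else 0)
      + ∑ k ∈ Icc 1 (n-1), (if j ∈ S ∧ j+1 ∉ S then dnF k (insert (j+1) (S.erase j)) else 0) := by
  unfold upF
  split_ifs with h
  all_goals first | rw [Fop_single, fFun] | simp

lemma Eop_rmF (n : ℕ) (S : Finset ℕ) :
    Eop n (rmF S) = NQ n • (if 1 ∈ S then addF (S.erase 1) else 0)
      + ∑ j ∈ Icc 1 (n-1), gQ n j • (if 1 ∈ S then upF j (S.erase 1) else 0) := by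
  unfold rmF
  split_ifs with h
  all_goals first | rw [Eop_single, eFun] | simp

lemma Eop_dnF (n k : ℕ) (S : Finset ℕ) :
    Eop n (dnF k S) = NQ n • (if k+1 ∈ S ∧ k ∉ S then addF (insert k (S.erase (k+1))) else 0)
      + ∑ j ∈ Icc 1 (n-1), gQ n j • (if k+1 ∈ S ∧ k ∉ S then upF j (insert k (S.erase (k+1))) else 0) := by
  unfold dnF
  split_ifs with h
  all_goals first | rw [Eop_single, eFun] | simp

/-! ### The key commutator lemma -/

lemma commK (n : ℕ) (S : Finset ℕ) (hS : S ⊆ Icc 1 n) :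
    Fop n (Eop n (Finsupp.single S 1)) - Eop n (Fop n (Finsupp.single S 1))
      = (NQ n - 2 * ((S.sum id : ℕ) : ℚ)) • Finsupp.single S 1 := by
  rw [Eop_single, Fop_single, eFun, fFun, map_add, map_add, map_smul, map_sum, map_sum]
  simp only [map_smul]
  rw [Fop_addF, Eop_rmF]
  simp only [Fop_upF, Eop_dnF]
  -- cancellation identities
  have hcan1 : ∀ j ∈ Icc 1 (n-1),
      gQ n j • ((if j ∈ S ∧ j+1 ∉ S then rmF (insert (j+1) (S.erase j)) else 0)
        - (if 1 ∈ S then upF j (S.erase 1) else 0)) = 0 := by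
    intro j hj
    rw [C5 j (Finset.mem_Icc.mp hj).1 S]
    simp
  have hcan2 : ∀ k ∈ Icc 1 (n-1),
      NQ n • ((if 1 ∉ S then dnF k (insert 1 S) else 0)
        - (if k+1 ∈ S ∧ k ∉ S then addF (insert k (S.erase (k+1))) else 0)) = 0 := by
    intro k hk
    rw [C6 k (Finset.mem_Icc.mp hk).1 S]
    simp
  have hcomm : ∑ x ∈ Icc 1 (n-1), ∑ j ∈ Icc 1 (n-1),
        gQ n j • (if x+1 ∈ S ∧ x ∉ S then upF j (insert x (S.erase (x+1))) else 0)
      = ∑ j ∈ Icc 1 (n-1), ∑ x ∈ Icc 1 (n-1),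
        gQ n j • (if x+1 ∈ S ∧ x ∉ S then upF j (insert x (S.erase (x+1))) else 0) :=
    Finset.sum_comm
  trans (NQ n • ((if 1 ∉ S then rmF (insert 1 S) else 0) - (if 1 ∈ S then addF (S.erase 1) else 0))
      + ∑ j ∈ Icc 1 (n-1), gQ n j • ((if j ∈ S ∧ j+1 ∉ S then rmF (insert (j+1) (S.erase j)) else 0)
          - (if 1 ∈ S then upF j (S.erase 1) else 0))
      + ∑ k ∈ Icc 1 (n-1), NQ n • ((if 1 ∉ S then dnF k (insert 1 S) else 0)
          - (if k+1 ∈ S ∧ k ∉ S then addF (insert k (S.erase (k+1))) else 0))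
      + ∑ j ∈ Icc 1 (n-1), ∑ k ∈ Icc 1 (n-1),
          gQ n j • ((if j ∈ S ∧ j+1 ∉ S then dnF k (insert (j+1) (S.erase j)) else 0)
            - (if k+1 ∈ S ∧ k ∉ S then upF j (insert k (S.erase (k+1))) else 0)))
  · simp only [smul_add, smul_sub, Finset.smul_sum, Finset.sum_add_distrib,
      Finset.sum_sub_distrib]
    rw [hcomm]
    abel
  rw [Finset.sum_eq_zero hcan1, Finset.sum_eq_zero hcan2]
  have hdiag : ∑ j ∈ Icc 1 (n-1), ∑ k ∈ Icc 1 (n-1),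
      gQ n j • ((if j ∈ S ∧ j+1 ∉ S then dnF k (insert (j+1) (S.erase j)) else 0)
        - (if k+1 ∈ S ∧ k ∉ S then upF j (insert k (S.erase (k+1))) else 0))
      = ∑ j ∈ Icc 1 (n-1), gQ n j •
          (((if j ∈ S ∧ j+1 ∉ S then (1:ℚ) else 0) - (if j+1 ∈ S ∧ j ∉ S then (1:ℚ) else 0))
            • Finsupp.single S 1) := by
    apply Finset.sum_congr rfl
    intro j hj
    rw [Finset.sum_eq_single_of_mem j hj]
    · congr 1
      rw [C3 j S, C4 j S]
      by_cases h1 : j ∈ S <;> by_cases h2 : j+1 ∈ S <;> simp [h1, h2]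
    · intro k hk hkj
      rw [C7 j k (Ne.symm hkj) S]
      simp
  rw [hdiag]
  have hfirst : ((if 1 ∉ S then rmF (insert 1 S) else 0) - (if 1 ∈ S then addF (S.erase 1) else 0))
      = ((if 1 ∉ S then (1:ℚ) else 0) - (if 1 ∈ S then (1:ℚ) else 0)) • Finsupp.single S 1 := by
    rw [C1 S, C2 S]
    by_cases h : 1 ∈ S <;> simp [h]
  rw [hfirst]
  simp only [smul_smul]
  rw [← Finset.sum_smul, add_zero, add_zero, ← add_smul]
  congr 1
  exact scalar_id n S hS



/-! ### Graded pieces -/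

noncomputable def bas (n k : ℕ) : {S // S ∈ A n k} → V := fun S => Finsupp.single S.val 1

noncomputable def W (n k : ℕ) : Submodule ℚ V := Submodule.span ℚ (Set.range (bas n k))

lemma bas_li (n k : ℕ) : LinearIndependent ℚ (bas n k) := by
  have h := (Finsupp.basisSingleOne (R := ℚ) (ι := Finset ℕ)).linearIndependent.comp
    (fun S : {S // S ∈ A n k} => S.val) Subtype.val_injective
  show LinearIndependent ℚ (fun S : {S // S ∈ A n k} => Finsupp.single S.val (1:ℚ))
  simpa [bas, Function.comp_def, Finsupp.coe_basisSingleOne] using h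

lemma finrank_W (n k : ℕ) : Module.finrank ℚ (W n k) = (A n k).card := by
  rw [W, finrank_span_eq_card (bas_li n k)]
  exact Fintype.card_coe _

lemma single_mem_W {n k : ℕ} {S : Finset ℕ} (h1 : S ⊆ Icc 1 n) (h2 : S.sum id = k) :
    Finsupp.single S (1:ℚ) ∈ W n k :=
  Submodule.subset_span ⟨⟨S, mem_A.mpr ⟨h1, h2⟩⟩, rfl⟩

instance W_fd (n k : ℕ) : FiniteDimensional ℚ (W n k) :=
  FiniteDimensional.span_of_finite ℚ (Set.finite_range _)

lemma addF_mem {n k : ℕ} (hn : 1 ≤ n) {S : Finset ℕ} (h1 : S ⊆ Icc 1 n) (h2 : S.sum id = k) :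
    addF S ∈ W n (k+1) := by
  unfold addF
  by_cases h : 1 ∈ S
  · rw [if_neg (not_not.mpr h)]
    exact Submodule.zero_mem _
  · rw [if_pos h]
    apply single_mem_W
    · intro a ha
      rcases Finset.mem_insert.mp ha with rfl | ha'
      · exact Finset.mem_Icc.mpr ⟨le_refl 1, hn⟩
      · exact h1 ha'
    · rw [Finset.sum_insert h]
      simp only [id_eq] at h2 ⊢
      have h2' : ∑ x ∈ S, x = k := h2
      omega

lemma upF_mem {n k j : ℕ} (hj1 : 1 ≤ j) (hj2 : j ≤ n - 1) (hn : 1 ≤ n) {S : Finset ℕ}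
    (h1 : S ⊆ Icc 1 n) (h2 : S.sum id = k) : upF j S ∈ W n (k+1) := by
  unfold upF
  by_cases h : j ∈ S ∧ j+1 ∉ S
  · rw [if_pos h]
    have hsum : ∑ x ∈ S.erase j, id x + id j = ∑ x ∈ S, id x := Finset.sum_erase_add S id h.1
    have h2' : ∑ x ∈ S, id x = k := h2
    apply single_mem_W
    · intro a ha
      rcases Finset.mem_insert.mp ha with rfl | ha'
      · exact Finset.mem_Icc.mpr ⟨by omega, by omega⟩
      · exact h1 (Finset.erase_subset _ _ ha')
    · rw [Finset.sum_insert (by simp [Finset.mem_erase, h.2])]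
      simp only [id_eq] at hsum h2' ⊢
      omega
  · rw [if_neg h]
    exact Submodule.zero_mem _

lemma rmF_mem {n k : ℕ} {S : Finset ℕ} (h1 : S ⊆ Icc 1 n) (h2 : S.sum id = k + 1) :
    rmF S ∈ W n k := by
  unfold rmF
  by_cases h : 1 ∈ S
  · rw [if_pos h]
    have hsum : ∑ x ∈ S.erase 1, id x + id 1 = ∑ x ∈ S, id x := Finset.sum_erase_add S id h
    have h2' : ∑ x ∈ S, id x = k + 1 := h2
    apply single_mem_W
    · exact fun a ha => h1 (Finset.erase_subset _ _ ha)
    · simp only [id_eq] at hsum h2' ⊢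
      omega
  · rw [if_neg h]
    exact Submodule.zero_mem _

lemma dnF_mem {n k j : ℕ} (hj1 : 1 ≤ j) (hj2 : j ≤ n - 1) {S : Finset ℕ}
    (h1 : S ⊆ Icc 1 n) (h2 : S.sum id = k + 1) : dnF j S ∈ W n k := by
  unfold dnF
  by_cases h : j+1 ∈ S ∧ j ∉ S
  · rw [if_pos h]
    have hsum : ∑ x ∈ S.erase (j+1), id x + id (j+1) = ∑ x ∈ S, id x :=
      Finset.sum_erase_add S id h.1
    have h2' : ∑ x ∈ S, id x = k + 1 := h2
    apply single_mem_W
    · intro a ha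
      rcases Finset.mem_insert.mp ha with rfl | ha'
      · exact Finset.mem_Icc.mpr ⟨by omega, by omega⟩
      · exact h1 (Finset.erase_subset _ _ ha')
    · rw [Finset.sum_insert (by simp [Finset.mem_erase, h.2])]
      simp only [id_eq] at hsum h2' ⊢
      omega
  · rw [if_neg h]
    exact Submodule.zero_mem _

lemma Eop_mem {n k : ℕ} (hn : 1 ≤ n) : ∀ x ∈ W n k, Eop n x ∈ W n (k+1) := by
  intro x hx
  induction hx using Submodule.span_induction with
  | mem x hxx =>
      obtain ⟨T, rfl⟩ := hxx
      obtain ⟨hT1, hT2⟩ := mem_A.mp T.2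
      simp only [bas, Eop_single, eFun]
      exact Submodule.add_mem _
        (Submodule.smul_mem _ _ (addF_mem hn hT1 hT2))
        (Submodule.sum_mem _ fun j hj => Submodule.smul_mem _ _
          (upF_mem (Finset.mem_Icc.mp hj).1 (Finset.mem_Icc.mp hj).2 hn hT1 hT2))
  | zero => simp [Submodule.zero_mem]
  | add x y hx hy ihx ihy => rw [map_add]; exact Submodule.add_mem _ ihx ihy
  | smul a x hx ihx => rw [map_smul]; exact Submodule.smul_mem _ a ihx

lemma Fop_mem {n k : ℕ} : ∀ x ∈ W n (k+1), Fop n x ∈ W n k := by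
  intro x hx
  induction hx using Submodule.span_induction with
  | mem x hxx =>
      obtain ⟨T, rfl⟩ := hxx
      obtain ⟨hT1, hT2⟩ := mem_A.mp T.2
      simp only [bas, Fop_single, fFun]
      exact Submodule.add_mem _ (rmF_mem hT1 hT2)
        (Submodule.sum_mem _ fun j hj =>
          dnF_mem (Finset.mem_Icc.mp hj).1 (Finset.mem_Icc.mp hj).2 hT1 hT2)
  | zero => simp [Submodule.zero_mem]
  | add x y hx hy ihx ihy => rw [map_add]; exact Submodule.add_mem _ ihx ihy
  | smul a x hx ihx => rw [map_smul]; exact Submodule.smul_mem _ a ihx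

lemma Fop_W0 {n : ℕ} : ∀ x ∈ W n 0, Fop n x = 0 := by
  intro x hx
  induction hx using Submodule.span_induction with
  | mem x hxx =>
      obtain ⟨T, rfl⟩ := hxx
      obtain ⟨hT1, hT2⟩ := mem_A.mp T.2
      have hSempty : T.val = ∅ := by
        rw [Finset.eq_empty_iff_forall_notMem]
        intro a ha
        have h1 := (Finset.mem_Icc.mp (hT1 ha)).1
        have h2 := Finset.sum_eq_zero_iff.mp hT2 a ha
        simp at h2
        omega
      simp only [bas, Fop_single, fFun, hSempty]
      have h1 : rmF ∅ = 0 := by simp [rmF]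
      have h2 : ∀ j, dnF j (∅ : Finset ℕ) = 0 := by intro j; simp [dnF]
      simp [h1, h2]
  | zero => simp
  | add x y hx hy ihx ihy => rw [map_add, ihx, ihy, add_zero]
  | smul a x hx ihx => rw [map_smul, ihx, smul_zero]

lemma comm_W {n k : ℕ} : ∀ x ∈ W n k,
    Fop n (Eop n x) - Eop n (Fop n x) = (NQ n - 2 * (k:ℚ)) • x := by
  intro x hx
  induction hx using Submodule.span_induction with
  | mem x hxx =>
      obtain ⟨T, rfl⟩ := hxx
      obtain ⟨hT1, hT2⟩ := mem_A.mp T.2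
      simp only [bas]
      rw [commK n T.val hT1, hT2]
  | zero => simp
  | add x y hx hy ihx ihy =>
      rw [map_add, map_add, map_add, map_add, smul_add]
      rw [show ∀ a b c d : V, a + b - (c + d) = (a - c) + (b - d) from fun a b c d => by abel]
      rw [ihx, ihy]
  | smul a x hx ihx =>
      rw [map_smul, map_smul, map_smul, map_smul, ← smul_sub, ihx, smul_comm]


/-! ### Injectivity induction -/

lemma NQ_cast (n k : ℕ) : NQ n - 2 * ((k:ℕ):ℚ) = ((Nn n : ℤ) - 2 * (k : ℤ) : ℤ) := by
  unfold NQ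
  push_cast
  ring

lemma inj_induction (n : ℕ) : ∀ k : ℕ, 2*k < Nn n → ∀ t : ℚ, 0 ≤ t →
    ∀ x ∈ W n k, Fop n (Eop n x) + t • x = 0 → x = 0 := by
  intro k
  induction k with
  | zero =>
      intro hk t ht x hx heq
      have hc := comm_W x hx
      rw [Fop_W0 x hx, map_zero, sub_zero] at hc
      rw [hc] at heq
      rw [← add_smul] at heq
      have hne : NQ n - 2 * ((0:ℕ):ℚ) + t ≠ 0 := by
        have : (0:ℚ) < NQ n := by
          unfold NQ
          exact_mod_cast Nat.pos_of_ne_zero (by omega)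
        push_cast
        linarith
      exact (smul_eq_zero.mp heq).resolve_left hne
  | succ m ih =>
      intro hk t ht x hx heq
      have hn : 1 ≤ n := by
        by_contra hcon
        interval_cases n
        simp [Nn] at hk
      have hc := comm_W x hx
      set c : ℚ := NQ n - 2 * (((m+1:ℕ)):ℚ) with hcdef
      have hcpos : 0 < c := by
        rw [hcdef]
        unfold NQ
        have : (2*(m+1) : ℕ) < Nn n := hk
        push_cast
        have : ((2*(m+1) : ℕ) : ℚ) < ((Nn n : ℕ) : ℚ) := by exact_mod_cast this
        push_cast at this
        linarith
      have hct : c + t ≠ 0 := by positivity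
      have h1 : Fop n (Eop n x) = -(t • x) := eq_neg_of_add_eq_zero_left heq
      have h2 : Eop n (Fop n x) = Fop n (Eop n x) - c • x := by rw [← hc]; abel
      have hEFx : Eop n (Fop n x) = -((c+t) • x) := by
        rw [h2, h1, add_smul]; abel
      obtain ⟨y, hydef⟩ : ∃ y : V, y = (-(c+t)⁻¹) • Fop n x := ⟨_, rfl⟩
      have hy : y ∈ W n m := by
        rw [hydef]
        exact Submodule.smul_mem _ _ (Fop_mem x hx)
      have hxy : x = Eop n y := by
        rw [hydef, map_smul, hEFx, smul_neg, smul_smul]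
        rw [neg_mul, neg_smul, neg_neg, inv_mul_cancel₀ hct, one_smul]
      have hEy : Eop n y ∈ W n (m+1) := Eop_mem hn y hy
      have hFEy : Fop n (Eop n (Eop n y)) + t • Eop n y = 0 := by
        rw [← hxy]; exact heq
      have h4 : Fop n (Eop n (Eop n y)) = -(t • Eop n y) := eq_neg_of_add_eq_zero_left hFEy
      have hcEy := comm_W (Eop n y) hEy
      have h3 : Eop n (Fop n (Eop n y)) = Fop n (Eop n (Eop n y)) - c • Eop n y := by
        rw [← hcEy]; abel
      have hEz : Eop n (Fop n (Eop n y) + (c+t) • y) = 0 := by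
        have hsm : Eop n ((c+t) • y) = (c+t) • Eop n y := map_smul _ _ _
        rw [map_add, hsm, h3, h4, add_smul]
        abel
      obtain ⟨z, hzdef⟩ : ∃ z : V, z = Fop n (Eop n y) + (c+t) • y := ⟨_, rfl⟩
      have hzW : z ∈ W n m := by
        rw [hzdef]
        exact Submodule.add_mem _ (Fop_mem _ (Eop_mem hn y hy)) (Submodule.smul_mem _ _ hy)
      have hEz' : Eop n z = 0 := by rw [hzdef]; exact hEz
      have hz0 : z = 0 := by
        apply ih (by omega) 0 le_rfl z hzW
        rw [hEz', map_zero, zero_smul, add_zero]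
      have hy0 : y = 0 := by
        apply ih (by omega) (c+t) (by positivity) y hy
        rw [← hzdef]
        exact hz0
      rw [hxy, hy0, map_zero]

lemma card_mono {n k : ℕ} (hk : 2*k < Nn n) : (A n k).card ≤ (A n (k+1)).card := by
  have hn : 1 ≤ n := by
    by_contra hcon
    interval_cases n
    simp [Nn] at hk
  let φ : W n k →ₗ[ℚ] W n (k+1) := (Eop n).restrict (Eop_mem hn)
  have hinj : Function.Injective φ := by
    rw [← LinearMap.ker_eq_bot, LinearMap.ker_eq_bot']
    intro a ha
    have hav : Eop n a.val = 0 := by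
      have := congrArg Subtype.val ha
      exact this
    have : a.val = 0 := by
      apply inj_induction n k hk 0 le_rfl a.val a.2
      rw [hav, map_zero, zero_smul, add_zero]
    exact Subtype.ext this
  have := LinearMap.finrank_le_finrank_of_injective hinj
  rwa [finrank_W, finrank_W] at this


lemma coeff_mono {n i : ℕ} (hi : 2*i < Nn n) : (P n).coeff i ≤ (P n).coeff (i+1) := by
  rw [coeff_P, coeff_P]
  exact card_mono hi

end Stmt18

namespace Stmt18

lemma unimodal_P (n : ℕ) : UnimodalPolyN (P n) := by
  refine ⟨(Nn n + 1)/2, ?_, ?_⟩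
  · intro i hi
    apply coeff_mono
    omega
  · intro i hi
    by_cases h : Nn n < i + 1
    · rw [coeff_P, A_eq_empty h, Finset.card_empty]
      exact Nat.zero_le _
    · push_neg at h
      rw [coeff_P, coeff_P]
      rw [card_A_symm h, card_A_symm (by omega : i ≤ Nn n)]
      have hj : Nn n - i = (Nn n - (i+1)) + 1 := by omega
      rw [hj]
      apply card_mono
      omega

end Stmt18

/-- The polynomial `∏_{i=1}^n (1+q^i)` is symmetric and unimodal. -/
theorem stmt_18 (n : ℕ) :
    SymmPolyN (∏ i ∈ Finset.Icc 1 n, (1 + (Polynomial.X : Polynomial ℕ) ^ i)) ∧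
    UnimodalPolyN (∏ i ∈ Finset.Icc 1 n, (1 + (Polynomial.X : Polynomial ℕ) ^ i)) :=
  ⟨Stmt18.symm_P n, Stmt18.unimodal_P n⟩
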